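/- Let u ∈ N be nonzero and let 𝒱 ∈ ∧^{2n} L satisfy 𝒱·ū = u. Then 𝒱̄·u = ū, and the duality pairing ⟨𝒱, 𝒱̄⟩ equals (−1)^n, where the pairing between ∧^{2n} L and ∧^{2n} L̄ is induced by the pairing ⟨X, θ⟩ = 2⟨X, θ⟩ between L and L̄ (for X ∈ L, θ ∈ L̄), extended to top exterior powers by the determinant formula ⟨X₁ ∧ ⋯ ∧ X_{2n}, θ₁ ∧ ⋯ ∧ θ_{2n}⟩ = det(⟨X_a, θ_b⟩). In particular, the element of ∧^{2n} L̄ dual to 𝒱 is Ω = (−1)^n 𝒱̄. -/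

import Mathlib

set_option synthInstance.maxHeartbeats 1000000
set_option maxHeartbeats 1000000

open scoped TensorProduct

variable (T : Type*) [AddCommGroup T] [Module ℝ T]

/-- The complexified tangent space `T ⊗ ℂ`. -/
abbrev Tc := ℂ ⊗[ℝ] T

/-- The complexified cotangent space `T* ⊗ ℂ`, realized as the `ℂ`-dual of `T ⊗ ℂ`. -/
abbrev Tsc := Module.Dual ℂ (Tc T)

/-- The complexification `(T ⊕ T*) ⊗ ℂ`. -/
abbrev Ec := Tc T × Tsc T

/-- The spinor space `S = ∧ (T* ⊗ ℂ)`. -/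
abbrev Sp := ExteriorAlgebra ℂ (Tsc T)

/-- The `ℂ`-bilinear extension of the canonical symmetric pairing
`⟨x₁ + η₁, x₂ + η₂⟩ = (1/2)(η₂(x₁) + η₁(x₂))` on `T ⊕ T*`. -/
noncomputable def pairEc (z w : Ec T) : ℂ := (1 / 2 : ℂ) * (w.2 z.1 + z.2 w.1)

/-- The Clifford action `(x + η) · ρ = ι_x ρ + η ∧ ρ` of `(T ⊕ T*) ⊗ ℂ` on spinors. -/
noncomputable def clAct (z : Ec T) : Module.End ℂ (Sp T) :=
  CliffordAlgebra.contractLeft (Module.Dual.eval ℂ (Tc T) z.1)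
    + LinearMap.mulLeft ℂ (ExteriorAlgebra.ι ℂ z.2)

/-- The `μ`-eigenspace of an endomorphism `Jc` of `(T ⊕ T*) ⊗ ℂ`. -/
noncomputable def eigSp (Jc : Module.End ℂ (Ec T)) (μ : ℂ) : Submodule ℂ (Ec T) where
  carrier := {z | Jc z = μ • z}
  add_mem' := by
    intro a b ha hb
    simp only [Set.mem_setOf_eq] at *
    rw [map_add, ha, hb, smul_add]
  zero_mem' := by simp [Set.mem_setOf_eq]
  smul_mem' := by
    intro c z hz
    simp only [Set.mem_setOf_eq] at *
    rw [map_smul, hz, smul_comm]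

/-- The pure spinor line of a subspace `L ⊆ (T ⊕ T*) ⊗ ℂ`:
`N = {ρ ∈ S : z · ρ = 0 for all z ∈ L}`. -/
noncomputable def pureSpinorLine (L : Submodule ℂ (Ec T)) : Submodule ℂ (Sp T) :=
  ⨅ z ∈ L, LinearMap.ker (clAct T z)

/-- `N_k = ∧^k L̄ · N`: the span of all `W·ρ` with `W` a Clifford product of `k` elements of
the `(−i)`-eigenspace `L̄` of `Jc` and `ρ ∈ N`, the pure spinor line of the `(+i)`-eigenspace. -/
noncomputable def NGr (Jc : Module.End ℂ (Ec T)) (k : ℕ) : Submodule ℂ (Sp T) :=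
  Submodule.span ℂ
    {s | ∃ Wv : Fin k → Ec T, (∀ a, Wv a ∈ eigSp T Jc (-Complex.I)) ∧
      ∃ ρ ∈ pureSpinorLine T (eigSp T Jc Complex.I),
        s = ((List.ofFn fun a => clAct T (Wv a)).prod) ρ}

/-- The Mukai pairing on spinors: the top-degree (`2n`) component of `χᵀ ∧ ω`, where
`χ ↦ χᵀ` is the reversal anti-automorphism. -/
noncomputable def mukaiSp (n : ℕ) (χ ω : Sp T) : Sp T :=
  GradedAlgebra.proj (fun i : ℕ => ⋀[ℂ]^i (Tsc T)) (2 * n) (CliffordAlgebra.reverse χ * ω)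

/-- The conjugation on `(T ⊕ T*) ⊗ ℂ` built from a conjugation `σT` on `T ⊗ ℂ` and the
induced conjugation `σTs` on `T* ⊗ ℂ`. -/
noncomputable def conjEc (σT : Tc T →+ Tc T) (σTs : Tsc T → Tsc T) (z : Ec T) : Ec T :=
  (σT z.1, σTs z.2)

section AbstractClifford

variable {S : Type*} [AddCommGroup S] [Module ℂ S]

lemma aux_moveX (u : S) (x : Module.End ℂ S) :
    ∀ (k : ℕ) (θ : Fin (k + 1) → Module.End ℂ S) (c : Fin (k + 1) → ℂ),
    x u = 0 → (∀ b, x * θ b + θ b * x = c b • 1) →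
    x ((List.ofFn θ).prod u) =
      ∑ j : Fin (k + 1), ((-1 : ℂ) ^ (j : ℕ) * c j) •
        ((List.ofFn fun i : Fin k => θ (j.succAbove i)).prod u) := by
  intro k
  induction k with
  | zero =>
    intro θ c hx hrel
    have h0 := congrArg (fun f : Module.End ℂ S => f u) (hrel 0)
    simp only [LinearMap.add_apply, Module.End.mul_apply, LinearMap.smul_apply,
      Module.End.one_apply, hx, map_zero, add_zero] at h0
    simp [h0]
  | succ k IH =>
    intro θ c hx hrel
    have hw := IH (fun i => θ (Fin.succ i)) (fun i => c (Fin.succ i)) hx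
      (fun b => hrel (Fin.succ b))
    have h0 := congrArg
      (fun f : Module.End ℂ S => f ((List.ofFn fun i => θ (Fin.succ i)).prod u)) (hrel 0)
    simp only [LinearMap.add_apply, Module.End.mul_apply, LinearMap.smul_apply,
      Module.End.one_apply] at h0
    rw [List.ofFn_succ, List.prod_cons, Module.End.mul_apply]
    have key : x (θ 0 ((List.ofFn fun i => θ (Fin.succ i)).prod u)) =
        c 0 • ((List.ofFn fun i => θ (Fin.succ i)).prod u)
          - θ 0 (x ((List.ofFn fun i => θ (Fin.succ i)).prod u)) := by
      rw [eq_sub_iff_add_eq]; exact h0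
    have hsplit : (∑ j : Fin (k + 1 + 1), ((-1 : ℂ) ^ (j : ℕ) * c j) •
          ((List.ofFn fun i : Fin (k + 1) => θ (j.succAbove i)).prod u)) =
        c 0 • ((List.ofFn fun i : Fin (k + 1) => θ (Fin.succ i)).prod u) +
          ∑ j : Fin (k + 1), (-(((-1 : ℂ) ^ (j : ℕ) * c (Fin.succ j)))) •
            (θ 0 ((List.ofFn fun i : Fin k => θ (Fin.succ (j.succAbove i))).prod u)) := by
      rw [Fin.sum_univ_succ]
      congr 1
      · simp [Fin.zero_succAbove]
      · refine Finset.sum_congr rfl fun j _ => ?_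
        have hlist : (List.ofFn fun i : Fin (k + 1) => θ ((Fin.succ j).succAbove i)) =
            θ 0 :: (List.ofFn fun i : Fin k => θ (Fin.succ (j.succAbove i))) := by
          rw [List.ofFn_succ]
          simp [Fin.succ_succAbove_zero, Fin.succ_succAbove_succ]
        rw [hlist, List.prod_cons, Module.End.mul_apply]
        congr 1
        simp only [Fin.val_succ, pow_succ]
        ring
    rw [key, hw, map_sum, hsplit, sub_eq_add_neg, ← Finset.sum_neg_distrib]
    congr 1
    refine Finset.sum_congr rfl fun j _ => ?_
    rw [map_smul, ← neg_smul]

end AbstractClifford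

section AbstractDet

variable {S : Type*} [AddCommGroup S] [Module ℂ S]

lemma aux_det (u : S) :
    ∀ (k : ℕ) (x θ : Fin k → Module.End ℂ S) (g : Matrix (Fin k) (Fin k) ℂ),
    (∀ a, x a u = 0) →
    (∀ a b, x a * θ b + θ b * x a = g a b • 1) →
    (List.ofFn x).prod ((List.ofFn θ).prod u) =
      ((-1 : ℂ) ^ (k * (k - 1) / 2) * g.det) • u := by
  intro k
  induction k with
  | zero =>
    intro x θ g _ _
    simp [Matrix.det_isEmpty]
  | succ k IH =>
    intro x θ g hx hrel
    rw [List.ofFn_succ' (f := x), List.prod_concat, Module.End.mul_apply]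
    rw [aux_moveX u (x (Fin.last k)) k θ (fun b => g (Fin.last k) b) (hx _)
      (fun b => hrel (Fin.last k) b)]
    rw [map_sum]
    have hterm : ∀ j : Fin (k + 1),
        (List.ofFn fun i => x (Fin.castSucc i)).prod
            ((((-1 : ℂ) ^ (j : ℕ) * g (Fin.last k) j) •
              ((List.ofFn fun i : Fin k => θ (j.succAbove i)).prod u))) =
        (((-1 : ℂ) ^ (j : ℕ) * g (Fin.last k) j) *
          ((-1 : ℂ) ^ (k * (k - 1) / 2) *
            (g.submatrix Fin.castSucc j.succAbove).det)) • u := by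
      intro j
      rw [map_smul, IH (fun i => x (Fin.castSucc i)) (fun i => θ (j.succAbove i))
        (g.submatrix Fin.castSucc j.succAbove) (fun a => hx _)
        (fun a b => hrel _ _), smul_smul]
    simp only [hterm]
    rw [← Finset.sum_smul]
    congr 1
    rw [Matrix.det_succ_row g (Fin.last k)]
    rw [Finset.mul_sum]
    refine Finset.sum_congr rfl fun j _ => ?_
    rw [Fin.succAbove_last, Fin.val_last]
    have e1 : (k + 1) * (k + 1 - 1) / 2 = k * (k - 1) / 2 + k := by
      have h : (k + 1) * (k + 1 - 1) = k * (k - 1) + 2 * k := by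
        cases k with
        | zero => rfl
        | succ m => simp only [Nat.succ_sub_one]; ring
      rw [h, Nat.add_mul_div_left _ _ (by norm_num : 0 < 2)]
    have e2 : (-1 : ℂ) ^ k * (-1 : ℂ) ^ k = 1 := by
      rw [← pow_add]
      exact Even.neg_one_pow ⟨k, rfl⟩
    rw [e1, pow_add, pow_add]
    linear_combination (-((-1:ℂ)^(k*(k-1)/2) * (-1:ℂ)^(j:ℕ) * g (Fin.last k) j *
      (g.submatrix Fin.castSucc j.succAbove).det)) * e2

end AbstractDet

lemma clAct_anticomm (z w : Ec T) :
    clAct T z * clAct T w + clAct T w * clAct T z = (2 * pairEc T z w) • 1 := by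
  refine LinearMap.ext fun s => ?_
  simp only [clAct, LinearMap.add_apply, Module.End.mul_apply, LinearMap.smul_apply,
    Module.End.one_apply, LinearMap.mulLeft_apply, map_add]
  rw [CliffordAlgebra.contractLeft_ι_mul, CliffordAlgebra.contractLeft_ι_mul]
  rw [CliffordAlgebra.contractLeft_comm]
  have hιι : ExteriorAlgebra.ι ℂ z.2 * (ExteriorAlgebra.ι ℂ w.2 * s)
      + ExteriorAlgebra.ι ℂ w.2 * (ExteriorAlgebra.ι ℂ z.2 * s) = 0 := by
    rw [← mul_assoc, ← mul_assoc, ← add_mul, ExteriorAlgebra.ι_add_mul_swap, zero_mul]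
  have hpair : (2 * pairEc T z w) = w.2 z.1 + z.2 w.1 := by
    rw [pairEc]; ring
  rw [hpair]
  simp only [Module.Dual.eval_apply]
  rw [add_smul]
  linear_combination (norm := abel) hιι

section Conj

variable {T}
variable (σT : Tc T →+ Tc T) (σTs : Tsc T → Tsc T) (σS : Sp T →+ Sp T)

lemma sigmaT_invol (hσT : ∀ (c : ℂ) (t : T), σT (c ⊗ₜ[ℝ] t) = (starRingEnd ℂ c) ⊗ₜ[ℝ] t)
    (v : Tc T) : σT (σT v) = v := by
  induction v using TensorProduct.induction_on with
  | zero => simp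
  | tmul c t => rw [hσT, hσT, Complex.conj_conj]
  | add a b ha hb => rw [map_add, map_add, ha, hb]

lemma sigmaTs_invol (hσT : ∀ (c : ℂ) (t : T), σT (c ⊗ₜ[ℝ] t) = (starRingEnd ℂ c) ⊗ₜ[ℝ] t)
    (hσTs : ∀ (η : Tsc T) (v : Tc T), σTs η v = starRingEnd ℂ (η (σT v)))
    (η : Tsc T) : σTs (σTs η) = η := by
  refine LinearMap.ext fun v => ?_
  rw [hσTs, hσTs, Complex.conj_conj, sigmaT_invol σT hσT]

lemma sigmaS_algebraMap (hσS1 : σS 1 = 1)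
    (hσSsmul : ∀ (c : ℂ) (s : Sp T), σS (c • s) = (starRingEnd ℂ c) • σS s) (r : ℂ) :
    σS (algebraMap ℂ (Sp T) r) = algebraMap ℂ (Sp T) (starRingEnd ℂ r) := by
  rw [Algebra.algebraMap_eq_smul_one, hσSsmul, hσS1, Algebra.algebraMap_eq_smul_one]

lemma sigmaS_contract
    (hσT : ∀ (c : ℂ) (t : T), σT (c ⊗ₜ[ℝ] t) = (starRingEnd ℂ c) ⊗ₜ[ℝ] t)
    (hσTs : ∀ (η : Tsc T) (v : Tc T), σTs η v = starRingEnd ℂ (η (σT v)))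
    (hσS1 : σS 1 = 1)
    (hσSmul : ∀ a b : Sp T, σS (a * b) = σS a * σS b)
    (hσSsmul : ∀ (c : ℂ) (s : Sp T), σS (c • s) = (starRingEnd ℂ c) • σS s)
    (hσSι : ∀ η : Tsc T, σS (ExteriorAlgebra.ι ℂ η) = ExteriorAlgebra.ι ℂ (σTs η))
    (x0 : Tc T) (s : Sp T) :
    σS (CliffordAlgebra.contractLeft (Module.Dual.eval ℂ (Tc T) x0) s) =
      CliffordAlgebra.contractLeft (Module.Dual.eval ℂ (Tc T) (σT x0)) (σS s) := by
  induction s using CliffordAlgebra.left_induction with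
  | algebraMap r =>
    rw [CliffordAlgebra.contractLeft_algebraMap, map_zero,
      sigmaS_algebraMap σS hσS1 hσSsmul, CliffordAlgebra.contractLeft_algebraMap]
  | add a b ha hb => rw [map_add, map_add, ha, hb, map_add, map_add]
  | ι_mul s m ih =>
    rw [CliffordAlgebra.contractLeft_ι_mul, AddMonoidHom.map_sub, hσSsmul, hσSmul, hσSι, ih]
    have hmul : σS (CliffordAlgebra.ι (0 : QuadraticForm ℂ (Tsc T)) m * s) =
        ExteriorAlgebra.ι ℂ (σTs m) * σS s := by
      rw [hσSmul, hσSι]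
    rw [hmul, CliffordAlgebra.contractLeft_ι_mul]
    congr 2
    rw [Module.Dual.eval_apply, Module.Dual.eval_apply, hσTs, sigmaT_invol σT hσT]

lemma sigmaS_clAct
    (hσT : ∀ (c : ℂ) (t : T), σT (c ⊗ₜ[ℝ] t) = (starRingEnd ℂ c) ⊗ₜ[ℝ] t)
    (hσTs : ∀ (η : Tsc T) (v : Tc T), σTs η v = starRingEnd ℂ (η (σT v)))
    (hσS1 : σS 1 = 1)
    (hσSmul : ∀ a b : Sp T, σS (a * b) = σS a * σS b)
    (hσSsmul : ∀ (c : ℂ) (s : Sp T), σS (c • s) = (starRingEnd ℂ c) • σS s)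
    (hσSι : ∀ η : Tsc T, σS (ExteriorAlgebra.ι ℂ η) = ExteriorAlgebra.ι ℂ (σTs η))
    (z : Ec T) (s : Sp T) :
    σS (clAct T z s) = clAct T (conjEc T σT σTs z) (σS s) := by
  simp only [clAct, LinearMap.add_apply, LinearMap.mulLeft_apply, conjEc, map_add]
  rw [sigmaS_contract σT σTs σS hσT hσTs hσS1 hσSmul hσSsmul hσSι, hσSmul, hσSι]

lemma sigmaS_invol
    (hσT : ∀ (c : ℂ) (t : T), σT (c ⊗ₜ[ℝ] t) = (starRingEnd ℂ c) ⊗ₜ[ℝ] t)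
    (hσTs : ∀ (η : Tsc T) (v : Tc T), σTs η v = starRingEnd ℂ (η (σT v)))
    (hσS1 : σS 1 = 1)
    (hσSmul : ∀ a b : Sp T, σS (a * b) = σS a * σS b)
    (hσSsmul : ∀ (c : ℂ) (s : Sp T), σS (c • s) = (starRingEnd ℂ c) • σS s)
    (hσSι : ∀ η : Tsc T, σS (ExteriorAlgebra.ι ℂ η) = ExteriorAlgebra.ι ℂ (σTs η))
    (s : Sp T) : σS (σS s) = s := by
  induction s using CliffordAlgebra.induction with
  | algebraMap r =>
    rw [sigmaS_algebraMap σS hσS1 hσSsmul, sigmaS_algebraMap σS hσS1 hσSsmul, Complex.conj_conj]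
  | ι m => rw [hσSι, hσSι, sigmaTs_invol σT σTs hσT hσTs]
  | mul a b ha hb => rw [hσSmul, hσSmul, ha, hb]
  | add a b ha hb => rw [map_add, map_add, ha, hb]

lemma sigmaS_ofFn
    (hσT : ∀ (c : ℂ) (t : T), σT (c ⊗ₜ[ℝ] t) = (starRingEnd ℂ c) ⊗ₜ[ℝ] t)
    (hσTs : ∀ (η : Tsc T) (v : Tc T), σTs η v = starRingEnd ℂ (η (σT v)))
    (hσS1 : σS 1 = 1)
    (hσSmul : ∀ a b : Sp T, σS (a * b) = σS a * σS b)
    (hσSsmul : ∀ (c : ℂ) (s : Sp T), σS (c • s) = (starRingEnd ℂ c) • σS s)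
    (hσSι : ∀ η : Tsc T, σS (ExteriorAlgebra.ι ℂ η) = ExteriorAlgebra.ι ℂ (σTs η)) :
    ∀ (k : ℕ) (Z : Fin k → Ec T) (s : Sp T),
    σS ((List.ofFn fun a => clAct T (Z a)).prod s) =
      (List.ofFn fun a => clAct T (conjEc T σT σTs (Z a))).prod (σS s) := by
  intro k
  induction k with
  | zero => intro Z s; simp
  | succ k IH =>
    intro Z s
    rw [List.ofFn_succ, List.prod_cons, Module.End.mul_apply,
      sigmaS_clAct σT σTs σS hσT hσTs hσS1 hσSmul hσSsmul hσSι,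
      IH (fun i => Z (Fin.succ i))]
    conv_rhs => rw [List.ofFn_succ, List.prod_cons, Module.End.mul_apply]

end Conj

/-- let `u ∈ N` be nonzero and `𝒱 ∈ ∧^{2n} L` (written as a Clifford/wedge
product of elements `X 0, …, X (2n-1)` of `L`, as every element of the top exterior power
of `L` is) with `𝒱 · ū = u`. Then `𝒱̄ · u = ū` and `⟨𝒱, 𝒱̄⟩ = (−1)^n`, where the pairing of
`∧^{2n} L` with `∧^{2n} L̄` is `⟨X₁ ∧ ⋯ ∧ X_{2n}, θ₁ ∧ ⋯ ∧ θ_{2n}⟩ = det (2⟨X_a, θ_b⟩)`.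
In particular `Ω = (−1)^n 𝒱̄` is dual to `𝒱`: `⟨𝒱, Ω⟩ = (−1)^n ⟨𝒱, 𝒱̄⟩ = 1`. -/
theorem conj_top_product_and_duality {n : ℕ} [FiniteDimensional ℝ T]
    (hdim : Module.finrank ℝ T = 2 * n)
    (Jc : Module.End ℂ (Ec T))
    (hJ2 : Jc * Jc = -1)
    (hJorth : ∀ z w : Ec T, pairEc T (Jc z) (Jc w) = pairEc T z w)
    (σT : Tc T →+ Tc T)
    (hσT : ∀ (c : ℂ) (t : T), σT (c ⊗ₜ[ℝ] t) = (starRingEnd ℂ c) ⊗ₜ[ℝ] t)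
    (σTs : Tsc T → Tsc T)
    (hσTs : ∀ (η : Tsc T) (v : Tc T), σTs η v = starRingEnd ℂ (η (σT v)))
    (hJreal : ∀ z : Ec T, Jc (conjEc T σT σTs z) = conjEc T σT σTs (Jc z))
    (σS : Sp T →+ Sp T)
    (hσS1 : σS 1 = 1)
    (hσSmul : ∀ a b : Sp T, σS (a * b) = σS a * σS b)
    (hσSsmul : ∀ (c : ℂ) (s : Sp T), σS (c • s) = (starRingEnd ℂ c) • σS s)
    (hσSι : ∀ η : Tsc T, σS (ExteriorAlgebra.ι ℂ η) = ExteriorAlgebra.ι ℂ (σTs η))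
    (u : Sp T) (hu : u ∈ pureSpinorLine T (eigSp T Jc Complex.I)) (hune : u ≠ 0)
    (X : Fin (2 * n) → Ec T) (hX : ∀ a, X a ∈ eigSp T Jc Complex.I)
    -- `𝒱 = X 0 ∧ ⋯ ∧ X (2n-1)` satisfies `𝒱 · ū = u`
    (hV : ((List.ofFn fun a => clAct T (X a)).prod) (σS u) = u) :
    -- `𝒱̄ · u = ū`
    ((List.ofFn fun a => clAct T (conjEc T σT σTs (X a))).prod) u = σS u ∧
    -- `⟨𝒱, 𝒱̄⟩ = (−1)^n`
    Matrix.det (Matrix.of fun a b : Fin (2 * n) =>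
        2 * pairEc T (X a) (conjEc T σT σTs (X b))) = (-1 : ℂ) ^ n ∧
    -- `⟨𝒱, Ω⟩ = 1` for `Ω = (−1)^n 𝒱̄`
    (-1 : ℂ) ^ n * Matrix.det (Matrix.of fun a b : Fin (2 * n) =>
        2 * pairEc T (X a) (conjEc T σT σTs (X b))) = 1 := by
  
  -- Part 1: `V̄ · u = ū`
  have hconj1 : ((List.ofFn fun a => clAct T (conjEc T σT σTs (X a))).prod) u = σS u := by
    have h := congrArg σS hV
    rw [sigmaS_ofFn σT σTs σS hσT hσTs hσS1 hσSmul hσSsmul hσSι (2 * n) X (σS u)] at h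
    rwa [sigmaS_invol σT σTs σS hσT hσTs hσS1 hσSmul hσSsmul hσSι u] at h
  -- annihilation of `u` by elements of `L`
  have hx0 : ∀ a, clAct T (X a) u = 0 := by
    intro a
    have h1 := hu
    rw [pureSpinorLine, Submodule.mem_iInf] at h1
    have h2 := h1 (X a)
    rw [Submodule.mem_iInf] at h2
    exact h2 (hX a)
  -- the Clifford determinant computation
  have hdet := aux_det u (2 * n) (fun a => clAct T (X a))
    (fun b => clAct T (conjEc T σT σTs (X b)))
    (Matrix.of fun a b => 2 * pairEc T (X a) (conjEc T σT σTs (X b))) hx0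
    (fun a b => clAct_anticomm T (X a) (conjEc T σT σTs (X b)))
  rw [hconj1, hV] at hdet
  have e1 : 2 * n * (2 * n - 1) / 2 = n * (2 * n - 1) := by
    rw [mul_assoc]
    exact Nat.mul_div_cancel_left _ (by norm_num)
  have hsign : ((-1 : ℂ)) ^ (n * (2 * n - 1)) = (-1 : ℂ) ^ n := by
    rcases Nat.even_or_odd n with he | ho
    · rw [he.neg_one_pow, (he.mul_right _).neg_one_pow]
    · have hn1 : 0 < n := ho.pos
      have h2 : Odd (2 * n - 1) := ⟨n - 1, by omega⟩
      rw [ho.neg_one_pow, (ho.mul h2).neg_one_pow]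
  rw [e1, hsign] at hdet
  set D : ℂ := Matrix.det (Matrix.of fun a b : Fin (2 * n) =>
      2 * pairEc T (X a) (conjEc T σT σTs (X b))) with hD
  have h0 : ((-1 : ℂ) ^ n * D - 1) • u = 0 := by
    rw [sub_smul, one_smul, ← hdet, sub_self]
  have hc : (-1 : ℂ) ^ n * D = 1 := by
    rcases smul_eq_zero.mp h0 with h | h
    · exact sub_eq_zero.mp h
    · exact absurd h hune
  have hnn : (-1 : ℂ) ^ n * (-1 : ℂ) ^ n = 1 := by
    rw [← pow_add]
    exact Even.neg_one_pow ⟨n, rfl⟩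
  refine ⟨hconj1, ?_, hc⟩
  calc D = ((-1 : ℂ) ^ n * (-1 : ℂ) ^ n) * D := by rw [hnn, one_mul]
  _ = (-1 : ℂ) ^ n * ((-1 : ℂ) ^ n * D) := by ring
  _ = (-1 : ℂ) ^ n := by rw [hc, mul_one]
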